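/- Let E > 0 and T_A > 2·T_B > 0. On (ℂ²)^{⊗3} with standard basis {e_b : b ∈ {0,1}^3}, let H be the diagonal Hamiltonian with H e_b = E · wgt(b) · e_b, and let ρ = γ_{T_A} ⊗ γ_{T_A} ⊗ γ_{T_B}, where γ_T = diag(1, e^{−E/T})/(1 + e^{−E/T}) (two hot qubits and one cold qubit with equal energy gaps). Let U be the permutation unitary exchanging e_{110} and e_{001} and fixing all other basis vectors. Then tr(U ρ U† H) < tr(ρ H). -/

import Mathlib

/-- The Gibbs occupation probability of level `j ∈ {0,1}` of a two-level
system with energy gap `E` at temperature `T`. -/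
noncomputable def qubitProb (E T : ℝ) (j : Fin 2) : ℝ :=
  (if j = 0 then 1 else Real.exp (-E / T)) / (1 + Real.exp (-E / T))

lemma star_permMatrix {n : Type*} [Fintype n] [DecidableEq n] (σ : Equiv.Perm n) :
    star (σ.permMatrix ℂ) = (σ⁻¹).permMatrix ℂ := by
  ext i j
  simp only [Matrix.star_apply, PEquiv.toMatrix_apply, Equiv.toPEquiv_apply,
    Option.mem_def, Option.some.injEq, apply_ite, star_one, star_zero,
    Equiv.Perm.inv_def]
  split_ifs with h1 h2 h3
  · rfl
  · exact absurd (by rw [← h1, Equiv.apply_symm_apply]) h2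
  · exact absurd (by rw [← h3, Equiv.symm_apply_apply]) h1
  · rfl

lemma perm_conj_diag {n : Type*} [Fintype n] [DecidableEq n] (σ : Equiv.Perm n) (d : n → ℂ) :
    σ.permMatrix ℂ * Matrix.diagonal d * star (σ.permMatrix ℂ)
      = Matrix.diagonal (d ∘ σ) := by
  rw [star_permMatrix, Matrix.mul_assoc, PEquiv.mul_toMatrix_toPEquiv,
    PEquiv.toMatrix_toPEquiv_mul]
  ext i j
  simp [Matrix.diagonal, Matrix.submatrix_apply, Equiv.eq_symm_apply]

lemma trace_diag_mul {n : Type*} [Fintype n] [DecidableEq n] (a b : n → ℝ) :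
    (Matrix.trace (Matrix.diagonal (fun i => (a i : ℂ)) *
      Matrix.diagonal (fun i => (b i : ℂ)))).re = ∑ i, a i * b i := by
  rw [Matrix.diagonal_mul_diagonal, Matrix.trace_diagonal]
  push_cast
  rw [Complex.re_sum]
  simp


/-- On two hot qubits at `T_A` and one cold qubit at `T_B` with equal energy
gaps and `T_A > 2 T_B`, the permutation unitary exchanging the basis states
`110` and `001` strictly decreases the average energy. -/

theorem stmt_11 (E T_A T_B : ℝ) (hE : 0 < E) (hTB : 0 < T_B)
    (hT : 2 * T_B < T_A) :
    (Matrix.trace (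
        ((Equiv.swap (![1, 1, 0] : Fin 3 → Fin 2) ![0, 0, 1]).permMatrix ℂ) *
        Matrix.diagonal (fun b : Fin 3 → Fin 2 =>
          ((qubitProb E T_A (b 0) * qubitProb E T_A (b 1) *
            qubitProb E T_B (b 2) : ℝ) : ℂ)) *
        star ((Equiv.swap (![1, 1, 0] : Fin 3 → Fin 2) ![0, 0, 1]).permMatrix ℂ) *
        Matrix.diagonal (fun b : Fin 3 → Fin 2 =>
          ((E * ∑ i, ((b i : ℕ) : ℝ) : ℝ) : ℂ)))).re <
    (Matrix.trace (
        Matrix.diagonal (fun b : Fin 3 → Fin 2 =>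
          ((qubitProb E T_A (b 0) * qubitProb E T_A (b 1) *
            qubitProb E T_B (b 2) : ℝ) : ℂ)) *
        Matrix.diagonal (fun b : Fin 3 → Fin 2 =>
          ((E * ∑ i, ((b i : ℕ) : ℝ) : ℝ) : ℂ)))).re := by
  set σ := Equiv.swap (![1, 1, 0] : Fin 3 → Fin 2) ![0, 0, 1] with hσ
  set P : (Fin 3 → Fin 2) → ℝ := fun b =>
    qubitProb E T_A (b 0) * qubitProb E T_A (b 1) * qubitProb E T_B (b 2) with hP
  set En : (Fin 3 → Fin 2) → ℝ := fun b => E * ∑ i, ((b i : ℕ) : ℝ) with hEn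
  rw [perm_conj_diag]
  have hc : ((fun b : Fin 3 → Fin 2 => ((P b : ℝ) : ℂ)) ∘ σ)
      = fun b : Fin 3 → Fin 2 => ((P (σ b) : ℝ) : ℂ) := rfl
  rw [hc, trace_diag_mul (fun b => P (σ b)) En, trace_diag_mul P En]
  rw [← sub_pos, ← Finset.sum_sub_distrib]
  have hb : (![1,1,0] : Fin 3 → Fin 2) ≠ ![0,0,1] := by decide
  have hsum : ∑ b : Fin 3 → Fin 2, (P b * En b - P (σ b) * En b)
      = ∑ b ∈ ({![1,1,0], ![0,0,1]} : Finset (Fin 3 → Fin 2)),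
          (P b * En b - P (σ b) * En b) := by
    refine (Finset.sum_subset (Finset.subset_univ _) ?_).symm
    intro b _ hbm
    simp only [Finset.mem_insert, Finset.mem_singleton, not_or] at hbm
    rw [hσ, Equiv.swap_apply_of_ne_of_ne hbm.1 hbm.2, sub_self]
  rw [hsum, Finset.sum_pair hb, hσ, Equiv.swap_apply_left, Equiv.swap_apply_right]
  have hEn1 : En ![1,1,0] = E * 2 := by
    simp [hEn, Fin.sum_univ_three]; norm_num
  have hEn2 : En ![0,0,1] = E * 1 := by
    simp [hEn, Fin.sum_univ_three]
  rw [hEn1, hEn2]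
  have hkey : P ![0,0,1] < P ![1,1,0] := by
    have hTA : 0 < T_A := lt_trans (by linarith) hT
    set A := Real.exp (-E / T_A) with hA
    set B := Real.exp (-E / T_B) with hB
    have hA0 : 0 < A := Real.exp_pos _
    have hB0 : 0 < B := Real.exp_pos _
    have hAB : B < A ^ 2 := by
      have hTA2 : 0 < T_A := lt_trans (by linarith) hT
      rw [hA, hB, sq, ← Real.exp_add, Real.exp_lt_exp,
        show -E / T_A + -E / T_A = (-(2*E)) / T_A by ring,
        div_lt_div_iff₀ hTB hTA2]
      nlinarith [mul_pos hE (sub_pos.mpr hT)]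
    simp only [hP, qubitProb]
    norm_num [Matrix.cons_val_zero, Matrix.cons_val_one, Matrix.head_cons]
    rw [← hA, ← hB]
    simp only [Matrix.cons_val_two, Matrix.cons_val_zero, Matrix.cons_val_one, Matrix.head_cons, Matrix.tail_cons]
    norm_num
    have hZA : (0:ℝ) < 1 + A := by linarith
    have hZB : (0:ℝ) < 1 + B := by linarith
    rw [show (1+A)⁻¹ * (1+A)⁻¹ * (B/(1+B)) = B / ((1+A)*(1+A)*(1+B)) by
          field_simp,
        show A/(1+A) * (A/(1+A)) * (1+B)⁻¹ = (A*A) / ((1+A)*(1+A)*(1+B)) by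
          field_simp,
        div_lt_div_iff₀ (by positivity) (by positivity)]
    have hD : (0:ℝ) < (1+A)*(1+A)*(1+B) := by positivity
    nlinarith [mul_lt_mul_of_pos_right hAB hD]
  nlinarith [hkey, hE]
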